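/- There exists a constant C > 0 (depending only on d, γ and R) such that for every integer n ≥ 1 and all x, y ∈ ℝᵈ with |x| ≤ R and |y| ≤ R, the 2d×2d symmetric matrix B := [[nξ + 2I, −nξ], [−nξ, nξ + 2I]], where ξ := γ|x−y|^{2γ−4}( |x−y|² I + 2(γ−1)(x−y)(x−y)ᵀ ) for x ≠ y and ξ := 0 for x = y, satisfies B + (1/n) B² ≤ C n |x−y|^{2γ−2} [[I, −I], [−I, I]] + C I_{2d} in the Loewner (positive semidefinite) order. -/

import Mathlib

open Set Filter Matrix

noncomputable section

/-- `ℝᵈ` with the Euclidean norm. -/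
abbrev Vec (d : ℕ) := EuclideanSpace ℝ (Fin d)

open scoped Classical

/-- The matrix `ξ = γ |x-y|^{2γ-4} ( |x-y|² I + 2 (γ-1) (x-y)(x-y)ᵀ )` for `x ≠ y`, and `0`
for `x = y`. -/
def xiMat {d : ℕ} (γ : ℝ) (z : Vec d) : Matrix (Fin d) (Fin d) ℝ :=
  if z = 0 then 0
  else (γ * ‖z‖ ^ (2 * γ - 4)) •
    (‖z‖ ^ 2 • (1 : Matrix (Fin d) (Fin d) ℝ) +
      (2 * (γ - 1)) • Matrix.vecMulVec (fun i => z i) (fun j => z j))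

/-- The `2d × 2d` block matrix `B = [[nξ + 2I, -nξ], [-nξ, nξ + 2I]]`. -/
def Bmat {d : ℕ} (γ : ℝ) (n : ℕ) (x y : Vec d) :
    Matrix (Fin d ⊕ Fin d) (Fin d ⊕ Fin d) ℝ :=
  Matrix.fromBlocks
    ((n : ℝ) • xiMat γ (x - y) + (2 : ℝ) • (1 : Matrix (Fin d) (Fin d) ℝ))
    (-((n : ℝ) • xiMat γ (x - y)))
    (-((n : ℝ) • xiMat γ (x - y)))
    ((n : ℝ) • xiMat γ (x - y) + (2 : ℝ) • (1 : Matrix (Fin d) (Fin d) ℝ))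

lemma dot_self_nonneg {d : ℕ} (w : Fin d → ℝ) : 0 ≤ w ⬝ᵥ w :=
  Finset.sum_nonneg fun i _ => mul_self_nonneg _

lemma zdot_self {d : ℕ} (z : Vec d) : (fun i => z i) ⬝ᵥ (fun i => z i) = ‖z‖ ^ 2 := by
  rw [EuclideanSpace.norm_eq, Real.sq_sqrt (by positivity)]
  simp [dotProduct, sq]

lemma zdot_cauchy {d : ℕ} (z : Vec d) (w : Fin d → ℝ) :
    ((fun i => z i) ⬝ᵥ w) ^ 2 ≤ ‖z‖ ^ 2 * (w ⬝ᵥ w) := by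
  have h := Finset.sum_mul_sq_le_sq_mul_sq Finset.univ (fun i => z i) w
  have h2 : ‖z‖ ^ 2 = ∑ i, z i ^ 2 := by
    rw [EuclideanSpace.norm_eq, Real.sq_sqrt (by positivity)]; simp
  simpa [dotProduct, sq, h2, mul_comm] using h

lemma vmv_mulVec {d : ℕ} (u v w : Fin d → ℝ) :
    Matrix.vecMulVec u v *ᵥ w = (v ⬝ᵥ w) • u := by
  funext i
  simp [vecMulVec_apply, mulVec, dotProduct, Finset.sum_mul, Finset.mul_sum,
    mul_comm, mul_left_comm]

lemma xi_mulVec {d : ℕ} (γ : ℝ) (z : Vec d) (w : Fin d → ℝ) :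
    xiMat γ z *ᵥ w = if z = 0 then 0 else
      (γ * ‖z‖ ^ (2 * γ - 4)) • ((‖z‖ ^ 2) • w +
        (2 * (γ - 1) * ((fun i => z i) ⬝ᵥ w)) • (fun i => z i)) := by
  unfold xiMat
  split_ifs with h
  · simp
  · rw [smul_mulVec, add_mulVec, smul_mulVec, smul_mulVec,
      one_mulVec, vmv_mulVec, smul_smul]

lemma xi_dot {d : ℕ} (γ : ℝ) (z : Vec d) (v w : Fin d → ℝ) :
    v ⬝ᵥ (xiMat γ z *ᵥ w) = if z = 0 then 0 else
      γ * ‖z‖ ^ (2 * γ - 4) * (‖z‖ ^ 2 * (v ⬝ᵥ w) +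
        2 * (γ - 1) * (((fun i => z i) ⬝ᵥ v) * ((fun i => z i) ⬝ᵥ w))) := by
  rw [xi_mulVec]
  split_ifs with h
  · simp
  · simp [dotProduct_smul, dotProduct_add, dotProduct_comm v]
    ring

lemma xi_dot_symm {d : ℕ} (γ : ℝ) (z : Vec d) (v w : Fin d → ℝ) :
    v ⬝ᵥ (xiMat γ z *ᵥ w) = w ⬝ᵥ (xiMat γ z *ᵥ v) := by
  rw [xi_dot, xi_dot]
  split_ifs with h
  · rfl
  · rw [dotProduct_comm v w]; ring

lemma xi_dot_nonneg {d : ℕ} {γ : ℝ} (hγ : 2 ≤ γ) (z : Vec d) (w : Fin d → ℝ) :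
    0 ≤ w ⬝ᵥ (xiMat γ z *ᵥ w) := by
  rw [xi_dot]
  split_ifs with h
  · exact le_refl 0
  · have h1 : 0 ≤ γ * ‖z‖ ^ (2 * γ - 4) := by positivity
    have h2 : 0 ≤ w ⬝ᵥ w := dot_self_nonneg w
    apply mul_nonneg h1
    have := sq_nonneg ((fun i => z i) ⬝ᵥ w)
    nlinarith [sq_nonneg (‖z‖), mul_nonneg (sq_nonneg ‖z‖) h2]

lemma xi_dot_le {d : ℕ} {γ : ℝ} (hγ : 2 ≤ γ) (z : Vec d) (w : Fin d → ℝ) :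
    w ⬝ᵥ (xiMat γ z *ᵥ w) ≤ γ * (2 * γ - 1) * ‖z‖ ^ (2 * γ - 2) * (w ⬝ᵥ w) := by
  rw [xi_dot]
  have hW := dot_self_nonneg w
  split_ifs with h
  · have h0 : (0:ℝ) ≤ ‖z‖ ^ (2 * γ - 2) := Real.rpow_nonneg (norm_nonneg z) _
    have h1 : (0:ℝ) ≤ γ * (2 * γ - 1) := by nlinarith
    exact mul_nonneg (mul_nonneg h1 h0) hW
  · have hN : 0 < ‖z‖ := norm_pos_iff.mpr h
    have hP := zdot_cauchy z w
    have key : ‖z‖ ^ (2 * γ - 4) * ‖z‖ ^ 2 = ‖z‖ ^ (2 * γ - 2) := by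
      rw [← Real.rpow_natCast ‖z‖ 2, ← Real.rpow_add hN]
      congr 1
      push_cast
      ring
    have h1 : 0 ≤ ‖z‖ ^ (2 * γ - 4) := Real.rpow_nonneg (norm_nonneg z) _
    calc γ * ‖z‖ ^ (2 * γ - 4) * (‖z‖ ^ 2 * (w ⬝ᵥ w) +
          2 * (γ - 1) * (((fun i => z i) ⬝ᵥ w) * ((fun i => z i) ⬝ᵥ w)))
        ≤ γ * ‖z‖ ^ (2 * γ - 4) * (‖z‖ ^ 2 * (w ⬝ᵥ w) +
          2 * (γ - 1) * (‖z‖ ^ 2 * (w ⬝ᵥ w))) := by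
          have : ((fun i => z i) ⬝ᵥ w) * ((fun i => z i) ⬝ᵥ w) ≤ ‖z‖ ^ 2 * (w ⬝ᵥ w) := by
            nlinarith [sq_nonneg ((fun i => z i) ⬝ᵥ w)]
          nlinarith [mul_nonneg (by positivity : (0:ℝ) ≤ γ * ‖z‖ ^ (2 * γ - 4))
            (by linarith : (0:ℝ) ≤ 2 * (γ - 1))]
      _ = γ * (2 * γ - 1) * (‖z‖ ^ (2 * γ - 4) * ‖z‖ ^ 2) * (w ⬝ᵥ w) := by ring
      _ = γ * (2 * γ - 1) * ‖z‖ ^ (2 * γ - 2) * (w ⬝ᵥ w) := by rw [key]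

lemma xi_sq_dot_le {d : ℕ} {γ : ℝ} (hγ : 2 ≤ γ) (z : Vec d) (w : Fin d → ℝ) :
    (xiMat γ z *ᵥ w) ⬝ᵥ (xiMat γ z *ᵥ w) ≤
      (γ * (2 * γ - 1)) ^ 2 * ‖z‖ ^ (4 * γ - 4) * (w ⬝ᵥ w) := by
  have hW := dot_self_nonneg w
  by_cases h : z = 0
  · rw [xi_mulVec]
    simp only [h, if_true, if_pos]
    simp only [zero_dotProduct]
    exact mul_nonneg (mul_nonneg (sq_nonneg _) (Real.rpow_nonneg (norm_nonneg _) _)) hW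
  · have hN : 0 < ‖z‖ := norm_pos_iff.mpr h
    have hP : ((fun i => z i) ⬝ᵥ w) ^ 2 ≤ ‖z‖ ^ 2 * (w ⬝ᵥ w) := zdot_cauchy z w
    have h1 : w ⬝ᵥ (xiMat γ z *ᵥ w) = γ * ‖z‖ ^ (2 * γ - 4) *
        (‖z‖ ^ 2 * (w ⬝ᵥ w) + 2 * (γ - 1) *
          (((fun i => z i) ⬝ᵥ w) * ((fun i => z i) ⬝ᵥ w))) := by
      rw [xi_dot]; simp [h]
    have h2 : (fun i => z i) ⬝ᵥ (xiMat γ z *ᵥ w) = γ * ‖z‖ ^ (2 * γ - 4) *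
        (‖z‖ ^ 2 * ((fun i => z i) ⬝ᵥ w) + 2 * (γ - 1) *
          (‖z‖ ^ 2 * ((fun i => z i) ⬝ᵥ w))) := by
      rw [xi_dot]; simp only [h, if_false, zdot_self]
    have key2 : ‖z‖ ^ (2 * γ - 4) * ‖z‖ ^ (2 * γ - 4) * (‖z‖ ^ 2 * ‖z‖ ^ 2)
        = ‖z‖ ^ (4 * γ - 4) := by
      rw [← Real.rpow_natCast ‖z‖ 2, ← Real.rpow_add hN, ← Real.rpow_add hN,
        ← Real.rpow_add hN]
      congr 1
      push_cast
      ring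
    have h3 : (xiMat γ z *ᵥ w) ⬝ᵥ (xiMat γ z *ᵥ w) = γ * ‖z‖ ^ (2 * γ - 4) *
        (‖z‖ ^ 2 * (w ⬝ᵥ (xiMat γ z *ᵥ w)) + 2 * (γ - 1) *
          (((fun i => z i) ⬝ᵥ (xiMat γ z *ᵥ w)) * ((fun i => z i) ⬝ᵥ w))) := by
      rw [xi_dot (γ := γ) (z := z) (v := xiMat γ z *ᵥ w) (w := w)]
      simp only [h, if_false]
      rw [dotProduct_comm (xiMat γ z *ᵥ w) w]
    rw [h3, h1, h2, ← key2]
    have hS : (0:ℝ) ≤ ‖z‖ ^ (2 * γ - 4) := Real.rpow_nonneg (norm_nonneg z) _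
    have hM : (0:ℝ) ≤ ‖z‖ ^ 2 := sq_nonneg _
    have H : (0:ℝ) ≤ (γ * ‖z‖ ^ (2 * γ - 4)) ^ 2 * ‖z‖ ^ 2 *
        ((2 * (γ - 1)) * (2 + 2 * (γ - 1))) *
        (‖z‖ ^ 2 * (w ⬝ᵥ w) - ((fun i => z i) ⬝ᵥ w) ^ 2) := by
      apply mul_nonneg (mul_nonneg (mul_nonneg (sq_nonneg _) hM) (by nlinarith))
      linarith
    nlinarith [H]

lemma xi_herm {d : ℕ} (γ : ℝ) (z : Vec d) : (xiMat γ z).IsHermitian := by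
  unfold xiMat
  split_ifs with h
  · exact isHermitian_zero
  · rw [Matrix.IsHermitian]
    ext i j
    simp only [conjTranspose_apply, Matrix.add_apply, Matrix.smul_apply, Matrix.one_apply,
      vecMulVec_apply, smul_eq_mul, star_trivial]
    rw [mul_comm (z j) (z i)]
    by_cases hij : i = j
    · subst hij; ring
    · rw [if_neg hij, if_neg (Ne.symm hij)]

lemma B_herm {d : ℕ} (γ : ℝ) (n : ℕ) (x y : Vec d) : (Bmat γ n x y).IsHermitian := by
  have hξ := xi_herm γ (x - y)
  unfold Bmat
  rw [Matrix.IsHermitian, fromBlocks_conjTranspose]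
  have ht : (xiMat γ (x - y))ᵀ = xiMat γ (x - y) := by
    ext i j
    have := congrFun (congrFun hξ.eq i) j
    simpa using this
  congr 1 <;>
    simp [conjTranspose_add, conjTranspose_smul, conjTranspose_neg, conjTranspose_one, ht]

lemma B_mulVec {d : ℕ} (γ : ℝ) (n : ℕ) (x y : Vec d) (v : Fin d ⊕ Fin d → ℝ) :
    Bmat γ n x y *ᵥ v =
      ((n : ℝ) • (xiMat γ (x - y) *ᵥ (v ∘ Sum.inl - v ∘ Sum.inr)) + (2 : ℝ) • (v ∘ Sum.inl))
        ⊕ᵥ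
      (-((n : ℝ) • (xiMat γ (x - y) *ᵥ (v ∘ Sum.inl - v ∘ Sum.inr))) + (2 : ℝ) • (v ∘ Sum.inr)) := by
  conv_lhs => rw [← Sum.elim_comp_inl_inr v]
  rw [Bmat, fromBlocks_mulVec]
  simp only [Sum.elim_comp_inl, Sum.elim_comp_inr, add_mulVec, neg_mulVec,
    smul_mulVec, one_mulVec, mulVec_sub]
  funext i
  cases i <;>
    simp only [Sum.elim_inl, Sum.elim_inr, Pi.add_apply, Pi.smul_apply, Pi.neg_apply,
      Pi.sub_apply, smul_eq_mul] <;> ring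

lemma B2_mulVec {d : ℕ} (γ : ℝ) (n : ℕ) (x y : Vec d) (v : Fin d ⊕ Fin d → ℝ) :
    (Bmat γ n x y * Bmat γ n x y) *ᵥ v =
      ((2 * (n : ℝ) ^ 2) • (xiMat γ (x - y) *ᵥ (xiMat γ (x - y) *ᵥ (v ∘ Sum.inl - v ∘ Sum.inr)))
          + (4 * (n : ℝ)) • (xiMat γ (x - y) *ᵥ (v ∘ Sum.inl - v ∘ Sum.inr))
          + (4 : ℝ) • (v ∘ Sum.inl))
        ⊕ᵥ
      (-((2 * (n : ℝ) ^ 2) • (xiMat γ (x - y) *ᵥ (xiMat γ (x - y) *ᵥ (v ∘ Sum.inl - v ∘ Sum.inr)))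
          + (4 * (n : ℝ)) • (xiMat γ (x - y) *ᵥ (v ∘ Sum.inl - v ∘ Sum.inr)))
          + (4 : ℝ) • (v ∘ Sum.inr)) := by
  rw [← mulVec_mulVec, B_mulVec γ n x y v]
  rw [Bmat, fromBlocks_mulVec]
  simp only [Sum.elim_comp_inl, Sum.elim_comp_inr, add_mulVec, neg_mulVec,
    smul_mulVec, one_mulVec, mulVec_sub, mulVec_add, mulVec_smul, mulVec_neg]
  funext i
  cases i <;>
    simp only [Sum.elim_inl, Sum.elim_inr, Pi.add_apply, Pi.smul_apply, Pi.neg_apply,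
      Pi.sub_apply, smul_eq_mul] <;> ring

lemma master (γ R : ℝ) (hγ : 2 ≤ γ) (hR : 0 < R) (n : ℕ) (hn : 1 ≤ n)
    (q r W S α : ℝ) (hq0 : 0 ≤ q) (hq : q ≤ γ * (2 * γ - 1) * α * W)
    (hr0 : 0 ≤ r) (hr : r ≤ (γ * (2 * γ - 1)) ^ 2 * (2 * R) ^ (2 * γ - 2) * α * W)
    (hW : 0 ≤ W) (hS : 0 ≤ S) (hα : 0 ≤ α) :
    0 ≤ (6 + 5 * (γ * (2 * γ - 1)) + 2 * (γ * (2 * γ - 1)) ^ 2 * (2 * R) ^ (2 * γ - 2))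
          * n * α * W +
        (6 + 5 * (γ * (2 * γ - 1)) + 2 * (γ * (2 * γ - 1)) ^ 2 * (2 * R) ^ (2 * γ - 2)) * S -
        ((n : ℝ) * q + 2 * S +
          (1 / (n : ℝ)) * (2 * (n : ℝ) ^ 2 * r + 4 * (n : ℝ) * q + 4 * S)) := by
  set c := γ * (2 * γ - 1) with hc_def
  set β := (2 * R) ^ (2 * γ - 2) with hβ_def
  have hc : 0 < c := by nlinarith
  have hβ : 0 < β := Real.rpow_pos_of_pos (by linarith) _
  have hn0 : (0:ℝ) < n := by exact_mod_cast Nat.lt_of_lt_of_le Nat.zero_lt_one hn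
  have hn1 : (1:ℝ) ≤ n := by exact_mod_cast hn
  have i1 : (1 / (n:ℝ)) * (2 * (n:ℝ) ^ 2 * r + 4 * (n:ℝ) * q + 4 * S)
      = 2 * (n:ℝ) * r + 4 * q + 4 * S / n := by
    field_simp
  rw [i1]
  have i3 : 4 * S / (n:ℝ) ≤ 4 * S := by
    rw [div_le_iff₀ hn0]
    nlinarith
  have h1 : (n : ℝ) * q ≤ (n : ℝ) * (c * α * W) := by
    exact mul_le_mul_of_nonneg_left hq (le_of_lt hn0)
  have h2 : c * α * W ≤ (n : ℝ) * (c * α * W) := by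
    have : 0 ≤ c * α * W := by positivity
    nlinarith
  have h5 : (n : ℝ) * r ≤ (n : ℝ) * (c ^ 2 * β * α * W) := by
    exact mul_le_mul_of_nonneg_left hr (le_of_lt hn0)
  have h7 : 0 ≤ (n : ℝ) * α * W := by positivity
  have h8 : 0 ≤ c * S := by positivity
  have h9 : 0 ≤ c ^ 2 * β * S := by positivity
  nlinarith [h1, h2, h5, h7, hq, i3, h8, h9]

lemma rpow_bridge {d : ℕ} (γ R : ℝ) (hγ : 2 ≤ γ) (hR : 0 < R) (z : Vec d)
    (hz : ‖z‖ ≤ 2 * R) : ‖z‖ ^ (4 * γ - 4) ≤ (2 * R) ^ (2 * γ - 2) * ‖z‖ ^ (2 * γ - 2) := by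
  by_cases h : z = 0
  · rw [h]
    simp only [norm_zero]
    rw [Real.zero_rpow (by nlinarith), Real.zero_rpow (by nlinarith)]
    simp
  · have hN : 0 < ‖z‖ := norm_pos_iff.mpr h
    have key : ‖z‖ ^ (4 * γ - 4) = ‖z‖ ^ (2 * γ - 2) * ‖z‖ ^ (2 * γ - 2) := by
      rw [← Real.rpow_add hN]
      congr 1
      ring
    rw [key]
    apply mul_le_mul_of_nonneg_right _ (Real.rpow_nonneg (norm_nonneg z) _)
    exact Real.rpow_le_rpow (norm_nonneg z) hz (by linarith)

lemma dot_elim {d : ℕ} (v : Fin d ⊕ Fin d → ℝ) (X Y : Fin d → ℝ) :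
    v ⬝ᵥ (X ⊕ᵥ Y) = (v ∘ Sum.inl) ⬝ᵥ X + (v ∘ Sum.inr) ⬝ᵥ Y := by
  conv_lhs => rw [← Sum.elim_comp_inl_inr v]
  exact sumElim_dotProduct_sumElim _ _ _ _

lemma dot_self_split {d : ℕ} (v : Fin d ⊕ Fin d → ℝ) :
    v ⬝ᵥ v = (v ∘ Sum.inl) ⬝ᵥ (v ∘ Sum.inl) + (v ∘ Sum.inr) ⬝ᵥ (v ∘ Sum.inr) := by
  simp [dotProduct, Fintype.sum_sum_type, Function.comp]

lemma K_mulVec {d : ℕ} (v : Fin d ⊕ Fin d → ℝ) :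
    (Matrix.fromBlocks (1 : Matrix (Fin d) (Fin d) ℝ) (-1) (-1) 1) *ᵥ v =
      (v ∘ Sum.inl - v ∘ Sum.inr) ⊕ᵥ (v ∘ Sum.inr - v ∘ Sum.inl) := by
  conv_lhs => rw [← Sum.elim_comp_inl_inr v]
  rw [fromBlocks_mulVec]
  simp only [Sum.elim_comp_inl, Sum.elim_comp_inr, one_mulVec, neg_mulVec]
  funext i
  cases i <;>
    · simp [sub_eq_add_neg]
      try ring


/-- There is a constant `C > 0` (depending only on `d`, `γ`, `R`) such
that for all `n ≥ 1` and `x, y` in the ball of radius `R`,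
`B + (1/n) B² ≤ C n |x-y|^{2γ-2} [[I, -I], [-I, I]] + C I_{2d}` in the Loewner order. -/
theorem block_matrix_bound
    {d : ℕ} (hd : 1 ≤ d) (γ R : ℝ) (hγ : 2 ≤ γ) (hR : 0 < R) :
    ∃ C > (0:ℝ), ∀ (n : ℕ), 1 ≤ n → ∀ x y : Vec d, ‖x‖ ≤ R → ‖y‖ ≤ R →
      ((C * (n : ℝ) * ‖x - y‖ ^ (2 * γ - 2)) •
          Matrix.fromBlocks (1 : Matrix (Fin d) (Fin d) ℝ) (-1) (-1) 1 +
        C • (1 : Matrix (Fin d ⊕ Fin d) (Fin d ⊕ Fin d) ℝ) -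
        (Bmat γ n x y + ((1 : ℝ) / (n : ℝ)) • (Bmat γ n x y * Bmat γ n x y))).PosSemidef := by
  have hc : 0 < γ * (2 * γ - 1) := by nlinarith
  have hβ : 0 < (2 * R) ^ (2 * γ - 2) := Real.rpow_pos_of_pos (by linarith) _
  refine ⟨6 + 5 * (γ * (2 * γ - 1)) + 2 * (γ * (2 * γ - 1)) ^ 2 * (2 * R) ^ (2 * γ - 2),
    by nlinarith, ?_⟩
  intro n hn x y hx hy
  rw [posSemidef_iff_dotProduct_mulVec]
  constructor
  · -- Hermitian part
    have hB := B_herm γ n x y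
    have hK : (Matrix.fromBlocks (1 : Matrix (Fin d) (Fin d) ℝ)
        (-1 : Matrix (Fin d) (Fin d) ℝ) (-1 : Matrix (Fin d) (Fin d) ℝ)
        (1 : Matrix (Fin d) (Fin d) ℝ)).IsHermitian := by
      rw [Matrix.IsHermitian, fromBlocks_conjTranspose]
      simp
    have hBt : (Bmat γ n x y)ᵀ = Bmat γ n x y := by
      ext i j
      have := congrFun (congrFun hB.eq i) j
      simpa using this
    have hKt : (Matrix.fromBlocks (1 : Matrix (Fin d) (Fin d) ℝ)
        (-1 : Matrix (Fin d) (Fin d) ℝ) (-1 : Matrix (Fin d) (Fin d) ℝ)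
        (1 : Matrix (Fin d) (Fin d) ℝ))ᵀ = Matrix.fromBlocks 1 (-1) (-1) 1 := by
      rw [fromBlocks_transpose]
      simp
    rw [Matrix.IsHermitian]
    simp [conjTranspose_sub, conjTranspose_add, conjTranspose_smul, conjTranspose_mul,
      conjTranspose_one, hBt, hKt]
  · intro v
    have hsv : star v = v := by
      funext i; exact star_trivial _
    rw [hsv]
    rw [sub_mulVec, add_mulVec, add_mulVec, smul_mulVec, smul_mulVec,
      smul_mulVec, one_mulVec]
    rw [dotProduct_sub, dotProduct_add, dotProduct_add, dotProduct_smul, dotProduct_smul,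
      dotProduct_smul]
    rw [K_mulVec, B_mulVec, B2_mulVec, dot_elim, dot_elim, dot_elim, dot_self_split v]
    have hzR : ‖x - y‖ ≤ 2 * R := by
      have := norm_sub_le x y
      linarith
    have hW : 0 ≤ (v ∘ Sum.inl - v ∘ Sum.inr) ⬝ᵥ (v ∘ Sum.inl - v ∘ Sum.inr) :=
      dot_self_nonneg _
    have hS : 0 ≤ (v ∘ Sum.inl) ⬝ᵥ (v ∘ Sum.inl) + (v ∘ Sum.inr) ⬝ᵥ (v ∘ Sum.inr) :=
      add_nonneg (dot_self_nonneg _) (dot_self_nonneg _)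
    have hα : 0 ≤ ‖x - y‖ ^ (2 * γ - 2) := Real.rpow_nonneg (norm_nonneg _) _
    have hr' : (xiMat γ (x - y) *ᵥ (v ∘ Sum.inl - v ∘ Sum.inr)) ⬝ᵥ
          (xiMat γ (x - y) *ᵥ (v ∘ Sum.inl - v ∘ Sum.inr)) ≤
        (γ * (2 * γ - 1)) ^ 2 * (2 * R) ^ (2 * γ - 2) * ‖x - y‖ ^ (2 * γ - 2) *
          ((v ∘ Sum.inl - v ∘ Sum.inr) ⬝ᵥ (v ∘ Sum.inl - v ∘ Sum.inr)) := by
      have h1 := xi_sq_dot_le hγ (x - y) (v ∘ Sum.inl - v ∘ Sum.inr)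
      have h2 := rpow_bridge γ R hγ hR (x - y) hzR
      have h3 : 0 ≤ (γ * (2 * γ - 1)) ^ 2 *
          ((2 * R) ^ (2 * γ - 2) * ‖x - y‖ ^ (2 * γ - 2) - ‖x - y‖ ^ (4 * γ - 4)) *
          ((v ∘ Sum.inl - v ∘ Sum.inr) ⬝ᵥ (v ∘ Sum.inl - v ∘ Sum.inr)) :=
        mul_nonneg (mul_nonneg (sq_nonneg _) (by linarith)) hW
      nlinarith [h1, h3]
    refine le_trans
      (master γ R hγ hR n hn
        ((v ∘ Sum.inl - v ∘ Sum.inr) ⬝ᵥ (xiMat γ (x - y) *ᵥ (v ∘ Sum.inl - v ∘ Sum.inr)))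
        ((xiMat γ (x - y) *ᵥ (v ∘ Sum.inl - v ∘ Sum.inr)) ⬝ᵥ
          (xiMat γ (x - y) *ᵥ (v ∘ Sum.inl - v ∘ Sum.inr)))
        ((v ∘ Sum.inl - v ∘ Sum.inr) ⬝ᵥ (v ∘ Sum.inl - v ∘ Sum.inr))
        ((v ∘ Sum.inl) ⬝ᵥ (v ∘ Sum.inl) + (v ∘ Sum.inr) ⬝ᵥ (v ∘ Sum.inr))
        (‖x - y‖ ^ (2 * γ - 2))
        (xi_dot_nonneg hγ _ _) (xi_dot_le hγ _ _) (dot_self_nonneg _) hr' hW hS hα)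
      (le_of_eq ?_)
    rw [xi_dot_symm γ (x - y) (xiMat γ (x - y) *ᵥ (v ∘ Sum.inl - v ∘ Sum.inr))
      (v ∘ Sum.inl - v ∘ Sum.inr)]
    simp only [sub_dotProduct, dotProduct_sub, dotProduct_add, dotProduct_smul,
      smul_dotProduct, dotProduct_neg, neg_dotProduct, smul_eq_mul,
      dotProduct_comm (v ∘ Sum.inr) (v ∘ Sum.inl)]
    ring
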